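/- arXiv:1902.08414 — 3 statements merged into one kernel-verified Lean document; each statement's English description precedes it below -/
import Mathlib

section
/- Let C be an n-element subset of ℚ and let S ⊊ C be a proper subset. Then S is not a support of C in P_n(ℚ): there exists a monotone bijection π of ℚ fixing every element of S but with π(C) ≠ C. Consequently, C is the least support of itself. -/
/-- A fixed piecewise-linear strictly monotone bijection of `ℚ` that is the
identity outside `(-1, 3)` and sends `0` to `1`. -/
def auxF0 : ℚ ≃ ℚ where
  toFun x := if x ≤ -1 then x else if x ≤ 0 then 2*x+1 else if x ≤ 3 then (2*x+3)/3 else x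
  invFun y := if y ≤ -1 then y else if y ≤ 1 then (y-1)/2 else if y ≤ 3 then (3*y-3)/2 else y
  left_inv x := by
    dsimp only
    split_ifs <;> linarith
  right_inv y := by
    dsimp only
    split_ifs <;> linarith

lemma auxF0_strictMono : StrictMono auxF0 := by
  intro x y hxy
  show (if x ≤ -1 then x else if x ≤ 0 then 2*x+1 else if x ≤ 3 then (2*x+3)/3 else x)
      < (if y ≤ -1 then y else if y ≤ 0 then 2*y+1 else if y ≤ 3 then (2*y+3)/3 else y)
  split_ifs <;> linarith

lemma auxF0_fix {t : ℚ} (h : t ≤ -1 ∨ 3 ≤ t) : auxF0 t = t := by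
  show (if t ≤ -1 then t else if t ≤ 0 then 2*t+1 else if t ≤ 3 then (2*t+3)/3 else t) = t
  rcases h with h | h <;> split_ifs <;> linarith

lemma auxF0_zero : auxF0 0 = 1 := by
  show (if (0:ℚ) ≤ -1 then (0:ℚ) else if (0:ℚ) ≤ 0 then 2*0+1 else if (0:ℚ) ≤ 3 then (2*0+3)/3 else 0) = 1
  norm_num

/-- Affine bijection `x ↦ c + ε x` of `ℚ`, for `ε ≠ 0`. -/
def auxAff (c ε : ℚ) (hε : ε ≠ 0) : ℚ ≃ ℚ where
  toFun x := c + ε * x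
  invFun y := (y - c) / ε
  left_inv x := by field_simp; ring
  right_inv y := by field_simp; ring

lemma auxAff_strictMono (c ε : ℚ) (hε : 0 < ε) :
    StrictMono (auxAff c ε hε.ne') := by
  intro x y hxy
  show c + ε * x < c + ε * y
  nlinarith

lemma auxAff_symm_strictMono (c ε : ℚ) (hε : 0 < ε) :
    StrictMono (auxAff c ε hε.ne').symm := by
  intro x y hxy
  show (x - c) / ε < (y - c) / ε
  exact div_lt_div_of_pos_right (by linarith) hε

/-- Key lemma: for any finite `F` and `c ∈ F`, there is a strictly monotone
bijection of `ℚ` fixing every element of `F` other than `c`, sending `c`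
outside `F`. -/
lemma aux_key (F : Finset ℚ) (c : ℚ) :
    ∃ π : ℚ ≃ ℚ, StrictMono π ∧ (∀ x ∈ F, x ≠ c → π x = x) ∧ π c ∉ F := by
  obtain ⟨ε, hε, hsep⟩ : ∃ ε : ℚ, 0 < ε ∧ ∀ x ∈ F, x ≠ c → 4 * ε ≤ |x - c| := by
    set s := (F.erase c).image (fun x => |x - c|) with hs
    by_cases hne : s.Nonempty
    · refine ⟨s.min' hne / 4, ?_, ?_⟩
      · have hpos : 0 < s.min' hne := by
          have hm := s.min'_mem hne
          simp only [hs, Finset.mem_image, Finset.mem_erase] at hm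
          obtain ⟨x, ⟨hx1, _⟩, hx2⟩ := hm
          rw [← hx2]
          exact abs_pos.mpr (sub_ne_zero.mpr hx1)
        linarith
      · intro x hx hxc
        have hmem : |x - c| ∈ s := by
          rw [hs]; exact Finset.mem_image_of_mem _ (Finset.mem_erase.mpr ⟨hxc, hx⟩)
        have := s.min'_le _ hmem
        linarith
    · refine ⟨1, one_pos, fun x hx hxc => ?_⟩
      exact absurd ⟨_, Finset.mem_image_of_mem _ (Finset.mem_erase.mpr ⟨hxc, hx⟩)⟩ hne
  set e := auxAff c ε hε.ne' with he
  refine ⟨(e.symm.trans auxF0).trans e, ?_, ?_, ?_⟩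
  · exact (auxAff_strictMono c ε hε).comp (auxF0_strictMono.comp (auxAff_symm_strictMono c ε hε))
  · intro x hx hxc
    have hsx := hsep x hx hxc
    have hfix : auxF0 ((x - c)/ε) = (x - c)/ε := by
      apply auxF0_fix
      rcases le_or_gt x c with h | h
      · left
        have h1 : c - x = |x - c| := by rw [abs_sub_comm]; exact (abs_of_nonneg (by linarith)).symm
        rw [div_le_iff₀ hε]
        linarith
      · right
        have h1 : x - c = |x - c| := (abs_of_nonneg (by linarith)).symm
        rw [le_div_iff₀ hε]
        linarith
    show e (auxF0 (e.symm x)) = x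
    have hsymm : e.symm x = (x - c)/ε := rfl
    rw [hsymm, hfix, ← hsymm, e.apply_symm_apply]
  · intro hmem
    replace hmem : e (auxF0 (e.symm c)) ∈ F := hmem
    have h0 : e.symm c = 0 := by
      show (c - c)/ε = 0
      simp
    rw [h0, auxF0_zero] at hmem
    have hval : e 1 = c + ε := by
      show c + ε * 1 = c + ε
      ring
    rw [hval] at hmem
    have hne : c + ε ≠ c := by intro h; nlinarith [hε]
    have := hsep _ hmem hne
    rw [show c + ε - c = ε by ring, abs_of_pos hε] at this
    linarith

/-- No proper subset `S ⊊ C` supports `C` in `P_n(ℚ)`: some monotone bijection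
fixes `S` pointwise but moves `C`.  Consequently `C` is its own least support:
it is contained in every support of itself. -/
theorem stmt_4 (n : ℕ) (C : Finset ℚ) (hC : C.card = n) :
    (∀ S : Finset ℚ, S ⊂ C →
      ∃ π : ℚ ≃ ℚ, StrictMono π ∧ (∀ s ∈ S, π s = s) ∧
        π '' (C : Set ℚ) ≠ (C : Set ℚ)) ∧
    (∀ S : Finset ℚ,
      (∀ π : ℚ ≃ ℚ, StrictMono π → (∀ s ∈ S, π s = s) →
        π '' (C : Set ℚ) = (C : Set ℚ)) → C ⊆ S) := by
  have main : ∀ S : Finset ℚ, ∀ c ∈ C, c ∉ S →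
      ∃ π : ℚ ≃ ℚ, StrictMono π ∧ (∀ s ∈ S, π s = s) ∧
        π '' (C : Set ℚ) ≠ (C : Set ℚ) := by
    intro S c hcC hcS
    obtain ⟨π, hmono, hfix, hout⟩ := aux_key (S ∪ C) c
    refine ⟨π, hmono, fun s hs => hfix s (Finset.mem_union_left _ hs)
      (fun h => hcS (h ▸ hs)), ?_⟩
    intro heq
    have : π c ∈ (C : Set ℚ) := heq ▸ Set.mem_image_of_mem π (by exact_mod_cast hcC)
    exact hout (Finset.mem_union_right _ (by exact_mod_cast this))
  constructor
  · intro S hS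
    obtain ⟨c, hcC, hcS⟩ := Finset.exists_of_ssubset hS
    exact main S c hcC hcS
  · intro S hsupp c hcC
    by_contra hcS
    obtain ⟨π, hmono, hfix, hne⟩ := main S c hcC hcS
    exact hne (hsupp π hmono hfix)
end

section
/- The set of integers ℤ, as an element of the powerset of ℚ with the direct-image action of monotone bijections, has no finite support: for every finite S ⊆ ℚ there exists a monotone bijection π of ℚ fixing S pointwise with π(ℤ) ≠ ℤ. -/
/-- The set of integers `ℤ ⊆ ℚ` has no finite support under the direct-image
action of monotone bijections. -/
theorem stmt_5 (S : Finset ℚ) :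
    ∃ π : ℚ ≃ ℚ, StrictMono π ∧ (∀ s ∈ S, π s = s) ∧
      π '' Set.range ((↑·) : ℤ → ℚ) ≠ Set.range ((↑·) : ℤ → ℚ) := by
  obtain ⟨q, hq⟩ := S.exists_le
  set n : ℤ := ⌈q⌉ with hndef
  have hn : ∀ s ∈ S, s ≤ (n : ℚ) := fun s hs => (hq s hs).trans (Int.le_ceil q)
  refine ⟨⟨fun x => if x ≤ (n:ℚ) then x else 2*x - n,
          fun x => if x ≤ (n:ℚ) then x else (x + n)/2, ?_, ?_⟩, ?_, ?_, ?_⟩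
  · intro x
    by_cases h : x ≤ (n:ℚ)
    · simp [h]
    · have h2 : ¬ (2*x - n ≤ (n:ℚ)) := by push_neg at h ⊢; linarith
      simp only [if_neg h, if_neg h2]
      ring
  · intro x
    by_cases h : x ≤ (n:ℚ)
    · simp [h]
    · have h2 : ¬ ((x + n)/2 ≤ (n:ℚ)) := by push_neg at h ⊢; linarith
      simp only [if_neg h, if_neg h2]
      ring
  · intro a b hab
    simp only [Equiv.coe_fn_mk]
    by_cases ha : a ≤ (n:ℚ) <;> by_cases hb : b ≤ (n:ℚ) <;>
      simp [ha, hb] <;> (try push_neg at *) <;> linarith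
  · intro s hs
    simp [hn s hs]
  · intro hIm
    have hmem : ((n:ℚ) + 1) ∈ Set.range ((↑·) : ℤ → ℚ) := ⟨n + 1, by push_cast; ring⟩
    rw [← hIm] at hmem
    obtain ⟨x, ⟨m, hm⟩, hfx⟩ := hmem
    simp only [Equiv.coe_fn_mk] at hfx
    subst hm
    by_cases h : (m:ℚ) ≤ (n:ℚ)
    · rw [if_pos h] at hfx
      have : (m:ℚ) = (n:ℚ) + 1 := hfx
      have : m ≤ n := by exact_mod_cast h
      have : (n:ℚ) + 1 ≤ (n:ℚ) := by rw [← hfx]; exact h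
      linarith
    · rw [if_neg h] at hfx
      have : (2*m : ℚ) = (2*n + 1 : ℤ) := by push_cast at hfx ⊢; linarith
      have h2 : (2*m : ℤ) = 2*n + 1 := by exact_mod_cast this
      omega
end

section
/- Let X and Y be orbit-finite nominal sets over the total order symmetry, represented by multiplicity functions f, g : ℕ → ℕ (where f(n) is the number of orbits of X of dimension n, and similarly for g). Then the number of orbits of X × Y of dimension n equals the sum over all i, j with 0 ≤ i, j ≤ n and i + j ≥ n of f(i)·g(j)·C(n, j)·C(j, n−i). -/
/-- The group of monotone bijections of `ℚ`, as a subgroup of `Equiv.Perm ℚ`. -/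
def MonoPerm : Subgroup (Equiv.Perm ℚ) where
  carrier := {π | StrictMono π}
  one_mem' := strictMono_id
  mul_mem' := fun ha hb => ha.comp hb
  inv_mem' := by
    intro π hπ a b hab
    have := hπ.lt_iff_lt (a := π⁻¹ a) (b := π⁻¹ b)
    simp only [Equiv.Perm.coe_inv, Equiv.apply_symm_apply] at this
    exact this.mp hab

/-- `C` supports `z`. -/
def OSupports {Z : Type*} [MulAction MonoPerm Z] (C : Finset ℚ) (z : Z) : Prop :=
  ∀ g : MonoPerm, (∀ c ∈ C, g • c = c) → g • z = z

/-- `C` is the least support of `z`. -/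
def OLeastSupport {Z : Type*} [MulAction MonoPerm Z] (C : Finset ℚ) (z : Z) : Prop :=
  OSupports C z ∧ ∀ D : Finset ℚ, OSupports D z → C ⊆ D

/-- The number of orbits of `Z` of dimension `n`, i.e. whose elements have a
least support of cardinality `n`. -/
noncomputable def orbitCountDim (Z : Type*) [MulAction MonoPerm Z] (n : ℕ) : ℕ :=
  Set.ncard {O : Quotient (MulAction.orbitRel MonoPerm Z) |
    ∃ z : Z, Quotient.mk _ z = O ∧ ∃ C : Finset ℚ, OLeastSupport C z ∧ C.card = n}

namespace MP

lemma strictMono (g : MonoPerm) : StrictMono (fun q : ℚ => g • q) := g.2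

lemma smul_rat_def (g : MonoPerm) (q : ℚ) : g • q = g.1 q := rfl

lemma smul_image (g : MonoPerm) (C : Finset ℚ) (c : ℚ) (hc : c ∈ C) :
    g • c ∈ C.image (g • ·) := Finset.mem_image_of_mem _ hc

lemma osupports_smul {Z : Type*} [MulAction MonoPerm Z] {C : Finset ℚ} {z : Z}
    (h : OSupports C z) (g : MonoPerm) : OSupports (C.image (g • ·)) (g • z) := by
  intro k hk
  have h1 : (g⁻¹ * k * g) • z = z := by
    apply h
    intro c hc
    have := hk (g • c) (smul_image g C c hc)
    rw [mul_smul, mul_smul, this, inv_smul_smul]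
  calc k • g • z = g • (g⁻¹ * k * g) • z := by rw [mul_smul, mul_smul, smul_inv_smul]
  _ = g • z := by rw [h1]

lemma image_image_inv (g : MonoPerm) (C : Finset ℚ) :
    (C.image (g • ·)).image (g⁻¹ • ·) = C := by
  rw [Finset.image_image]
  have : ((g⁻¹ • ·) ∘ (g • ·) : ℚ → ℚ) = id := by
    funext q; simp [inv_smul_smul]
  rw [this, Finset.image_id]

lemma oleast_smul {Z : Type*} [MulAction MonoPerm Z] {C : Finset ℚ} {z : Z}
    (h : OLeastSupport C z) (g : MonoPerm) : OLeastSupport (C.image (g • ·)) (g • z) := by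
  refine ⟨osupports_smul h.1 g, fun D hD => ?_⟩
  have h2 : OSupports (D.image (g⁻¹ • ·)) z := by
    have := osupports_smul hD g⁻¹
    rwa [inv_smul_smul] at this
  have h3 := h.2 _ h2
  intro q hq
  obtain ⟨c, hc, rfl⟩ := Finset.mem_image.1 hq
  have := h3 hc
  obtain ⟨d, hd, hde⟩ := Finset.mem_image.1 this
  rw [← hde, smul_inv_smul]; exact hd

lemma oleast_unique {Z : Type*} [MulAction MonoPerm Z] {C D : Finset ℚ} {z : Z}
    (h1 : OLeastSupport C z) (h2 : OLeastSupport D z) : C = D :=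
  Finset.Subset.antisymm (h1.2 D h2.1) (h2.2 C h1.1)

/-- A monotone bijection mapping a finite set onto itself fixes it pointwise. -/
lemma fix_of_image_eq (g : MonoPerm) (s : Finset ℚ) (h : s.image (g • ·) = s) :
    ∀ c ∈ s, g • c = c := by
  intro c hc
  have hmono : StrictMono (fun i : Fin s.card => g • (s.orderEmbOfFin rfl i)) :=
    fun a b hab => (strictMono g) ((s.orderEmbOfFin rfl).strictMono hab)
  have hmem : ∀ i : Fin s.card, g • (s.orderEmbOfFin rfl i) ∈ s := by
    intro i
    have := smul_image g s _ (Finset.orderEmbOfFin_mem s rfl i)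
    rwa [h] at this
  have hu := Finset.orderEmbOfFin_unique (rfl : s.card = s.card) hmem hmono
  -- c = orderEmbOfFin i for some i
  have : c ∈ Set.range (s.orderEmbOfFin rfl) := by rw [Finset.range_orderEmbOfFin]; exact hc
  obtain ⟨i, rfl⟩ := this
  exact congrFun hu i



def transPerm (v : ℚ) : MonoPerm :=
  ⟨Equiv.addRight v, fun a b h => by simpa using h⟩

lemma transPerm_apply (v q : ℚ) : transPerm v • q = q + v := rfl

def lowRayFun (t r : ℚ) : ℚ → ℚ := fun x => if t ≤ x then x else t + r * (x - t)

lemma lowRayFun_inv (t r : ℚ) (hr : 0 < r) :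
    Function.LeftInverse (lowRayFun t r⁻¹) (lowRayFun t r) := by
  intro x
  unfold lowRayFun
  by_cases hx : t ≤ x
  · simp [hx]
  · have hx' : x < t := not_le.1 hx
    have h1 : r * (x - t) < 0 := mul_neg_of_pos_of_neg hr (by linarith)
    have h2 : ¬ t ≤ t + r * (x - t) := by linarith
    simp only [if_neg hx, if_neg h2]
    field_simp
    ring

lemma lowRayFun_mono (t r : ℚ) (hr : 0 < r) : StrictMono (lowRayFun t r) := by
  intro a b hab
  unfold lowRayFun
  by_cases ha : t ≤ a
  · rw [if_pos ha, if_pos (le_trans ha hab.le)]; exact hab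
  · push_neg at ha
    rw [if_neg (not_le.2 ha)]
    by_cases hb : t ≤ b
    · rw [if_pos hb]
      have : r * (a - t) < 0 := mul_neg_of_pos_of_neg hr (by linarith)
      linarith
    · rw [if_neg hb]
      have : r * (a - t) < r * (b - t) := by
        apply mul_lt_mul_of_pos_left _ hr; linarith
      linarith

def lowRayPerm (t r : ℚ) (hr : 0 < r) : MonoPerm :=
  ⟨⟨lowRayFun t r, lowRayFun t r⁻¹, lowRayFun_inv t r hr,
    by have := lowRayFun_inv t r⁻¹ (by positivity); rw [inv_inv] at this; exact this⟩, lowRayFun_mono t r hr⟩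

lemma lowRayPerm_apply_of_le (t r : ℚ) (hr : 0 < r) (x : ℚ) (h : t ≤ x) :
    lowRayPerm t r hr • x = x := if_pos h

lemma lowRayPerm_apply_of_lt (t r : ℚ) (hr : 0 < r) (x : ℚ) (h : x < t) :
    lowRayPerm t r hr • x = t + r * (x - t) := if_neg (not_le.2 h)

/-- Homogeneity: any two strictly increasing tuples in ℚ are related by a monotone
bijection of ℚ. -/
lemma exists_monoPerm_map {m : ℕ} (c d : Fin m → ℚ) (hc : StrictMono c)
    (hd : StrictMono d) : ∃ g : MonoPerm, ∀ k, g • c k = d k := by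
  induction m with
  | zero => exact ⟨1, fun k => k.elim0⟩
  | succ m ih =>
    obtain ⟨g, hg⟩ := ih (c ∘ Fin.succ) (d ∘ Fin.succ)
      (hc.comp (Fin.strictMono_succ)) (hd.comp (Fin.strictMono_succ))
    simp only [Function.comp_apply] at hg
    rcases Nat.eq_zero_or_pos m with hm | hm
    · subst hm
      refine ⟨transPerm (d 0 - c 0), fun k => ?_⟩
      have : k = 0 := Fin.fin_one_eq_zero k
      subst this
      rw [transPerm_apply]; ring
    · -- m ≥ 1, so Fin (m+1) has index 1
      obtain ⟨i1, hi1⟩ : ∃ i1 : Fin (m+1), i1 = Fin.succ ⟨0, hm⟩ := ⟨_, rfl⟩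
      obtain ⟨t, ht⟩ : ∃ t : ℚ, t = d i1 := ⟨_, rfl⟩
      obtain ⟨a, ha⟩ : ∃ a : ℚ, a = g • c 0 := ⟨_, rfl⟩
      have hat : a < t := by
        have h1 : g • c 0 < g • c i1 := g.2 (hc (by simp [hi1, Fin.lt_def]))
        have h2 : g • c i1 = d i1 := by rw [hi1]; exact hg ⟨0, hm⟩
        rw [ha, ht, ← h2]; exact h1
      have hbt : d 0 < t := by rw [ht]; exact hd (by simp [hi1, Fin.lt_def])
      obtain ⟨r, hr⟩ : ∃ r : ℚ, r = (t - d 0) / (t - a) := ⟨_, rfl⟩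
      have hrpos : 0 < r := by rw [hr]; exact div_pos (by linarith) (by linarith)
      refine ⟨lowRayPerm t r hrpos * g, fun k => ?_⟩
      rw [mul_smul]
      refine Fin.cases ?_ (fun j => ?_) k
      · rw [← ha, lowRayPerm_apply_of_lt t r hrpos a hat, hr]
        have hne : t - a ≠ 0 := by linarith
        field_simp
        ring
      · rw [hg j]
        apply lowRayPerm_apply_of_le
        rw [ht]
        apply hd.monotone
        rw [hi1]
        simp [Fin.le_def, Nat.succ_le_succ (Nat.zero_le _)]


end MP

namespace MP
open Finset

lemma smul_injective (g : MonoPerm) : Function.Injective (fun q : ℚ => g • q) :=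
  MulAction.injective g

lemma card_image_smul (g : MonoPerm) (C : Finset ℚ) :
    (C.image (g • ·)).card = C.card :=
  Finset.card_image_of_injective _ (smul_injective g)

section prodsupp

variable {X Y : Type*} [MulAction MonoPerm X] [MulAction MonoPerm Y]

lemma osupports_fst {C : Finset ℚ} {z : X × Y} (h : OSupports C z) : OSupports C z.1 := by
  intro g hg
  have := h g hg
  exact congrArg Prod.fst this

lemma osupports_snd {C : Finset ℚ} {z : X × Y} (h : OSupports C z) : OSupports C z.2 := by
  intro g hg
  have := h g hg
  exact congrArg Prod.snd this

lemma oleast_prod {C D : Finset ℚ} {x : X} {y : Y}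
    (hC : OLeastSupport C x) (hD : OLeastSupport D y) :
    OLeastSupport (C ∪ D) (x, y) := by
  constructor
  · intro g hg
    have hx : g • x = x := hC.1 g fun c hc => hg c (Finset.mem_union_left _ hc)
    have hy : g • y = y := hD.1 g fun c hc => hg c (Finset.mem_union_right _ hc)
    show (g • x, g • y) = (x, y)
    rw [hx, hy]
  · intro E hE
    have h1 : C ⊆ E := hC.2 E (osupports_fst hE)
    have h2 : D ⊆ E := hD.2 E (osupports_snd hE)
    exact Finset.union_subset h1 h2

/-- Two elements in the same orbit with the same least support are equal. -/
lemma eq_of_smul_of_same_least {Z : Type*} [MulAction MonoPerm Z] {C : Finset ℚ}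
    {z z' : Z} (g : MonoPerm) (hgz : g • z = z')
    (hz : OLeastSupport C z) (hz' : OLeastSupport C z') : z = z' := by
  have h1 : OLeastSupport (C.image (g • ·)) z' := hgz ▸ oleast_smul hz g
  have h2 : C.image (g • ·) = C := oleast_unique h1 hz'
  have h3 : g • z = z := hz.1 g (fix_of_image_eq g C h2)
  rw [← hgz, h3]

end prodsupp

section patt

/-- The pattern of `C` inside `S`, as a subset of `Fin n` (junk if `S.card ≠ n`). -/
noncomputable def patt (n : ℕ) (S C : Finset ℚ) : Finset (Fin n) :=
  if h : S.card = n then Finset.univ.filter (fun k => S.orderEmbOfFin h k ∈ C) else ∅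

lemma patt_card {n : ℕ} {S C : Finset ℚ} (h : S.card = n) (hCS : C ⊆ S) :
    (patt n S C).card = C.card := by
  rw [patt, dif_pos h]
  have himg : (Finset.univ.filter (fun k => S.orderEmbOfFin h k ∈ C)).image
      (fun k => S.orderEmbOfFin h k) = C := by
    apply Finset.Subset.antisymm
    · intro c hc
      obtain ⟨k, hk, rfl⟩ := Finset.mem_image.1 hc
      exact (Finset.mem_filter.1 hk).2
    · intro c hc
      have : c ∈ Set.range (S.orderEmbOfFin h) := by
        rw [Finset.range_orderEmbOfFin]; exact hCS hc
      obtain ⟨k, rfl⟩ := this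
      exact Finset.mem_image_of_mem _ (Finset.mem_filter.2 ⟨Finset.mem_univ k, hc⟩)
  calc (Finset.univ.filter (fun k => S.orderEmbOfFin h k ∈ C)).card
      = ((Finset.univ.filter (fun k => S.orderEmbOfFin h k ∈ C)).image
          (fun k => S.orderEmbOfFin h k)).card :=
        (Finset.card_image_of_injective _ (S.orderEmbOfFin h).injective).symm
    _ = C.card := by rw [himg]

lemma patt_union_univ {n : ℕ} {S C D : Finset ℚ} (h : S.card = n) (hS : C ∪ D = S) :
    patt n S C ∪ patt n S D = Finset.univ := by
  simp only [patt, dif_pos h]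
  ext k
  simp only [Finset.mem_union, Finset.mem_filter, Finset.mem_univ, true_and, iff_true]
  have : S.orderEmbOfFin h k ∈ S := Finset.orderEmbOfFin_mem S h k
  have h2 : S.orderEmbOfFin h k ∈ C ∪ D := hS ▸ this
  exact Finset.mem_union.1 h2

/-- `patt` is equivariant. -/
lemma patt_smul {n : ℕ} (g : MonoPerm) (S C : Finset ℚ) :
    patt n (S.image (g • ·)) (C.image (g • ·)) = patt n S C := by
  by_cases h : S.card = n
  · have h' : (S.image (g • ·)).card = n := by rw [card_image_smul]; exact h
    rw [patt, patt, dif_pos h, dif_pos h']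
    have hemb : ∀ k : Fin n, (S.image (g • ·)).orderEmbOfFin h' k = g • (S.orderEmbOfFin h k) := by
      have hmono : StrictMono (fun k : Fin n => g • (S.orderEmbOfFin h k)) :=
        fun a b hab => (strictMono g) ((S.orderEmbOfFin h).strictMono hab)
      have hmem : ∀ k : Fin n, g • (S.orderEmbOfFin h k) ∈ S.image (g • ·) :=
        fun k => Finset.mem_image_of_mem _ (Finset.orderEmbOfFin_mem S h k)
      have := Finset.orderEmbOfFin_unique h' hmem hmono
      exact fun k => (congrFun this k).symm
    ext k
    simp only [Finset.mem_filter, Finset.mem_univ, true_and, hemb]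
    constructor
    · intro hm
      obtain ⟨c, hc, hce⟩ := Finset.mem_image.1 hm
      have : c = S.orderEmbOfFin h k := smul_injective g hce
      rwa [← this]
    · intro hm
      exact Finset.mem_image_of_mem _ hm
  · have h' : ¬ (S.image (g • ·)).card = n := by rw [card_image_smul]; exact h
    rw [patt, patt, dif_neg h, dif_neg h']

end patt

end MP

namespace MP

noncomputable def lsupp {Z : Type*} [MulAction MonoPerm Z]
    (hnom : ∀ z : Z, ∃ C : Finset ℚ, OLeastSupport C z) (z : Z) : Finset ℚ :=
  (hnom z).choose

lemma lsupp_spec {Z : Type*} [MulAction MonoPerm Z]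
    (hnom : ∀ z : Z, ∃ C : Finset ℚ, OLeastSupport C z) (z : Z) :
    OLeastSupport (lsupp hnom z) z :=
  (hnom z).choose_spec

lemma lsupp_eq {Z : Type*} [MulAction MonoPerm Z]
    (hnom : ∀ z : Z, ∃ C : Finset ℚ, OLeastSupport C z) {z : Z} {C : Finset ℚ}
    (h : OLeastSupport C z) : lsupp hnom z = C :=
  oleast_unique (lsupp_spec hnom z) h

lemma lsupp_smul {Z : Type*} [MulAction MonoPerm Z]
    (hnom : ∀ z : Z, ∃ C : Finset ℚ, OLeastSupport C z) (g : MonoPerm) (z : Z) :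
    lsupp hnom (g • z) = (lsupp hnom z).image (g • ·) :=
  lsupp_eq hnom (oleast_smul (lsupp_spec hnom z) g)

section main

variable {X Y : Type*} [MulAction MonoPerm X] [MulAction MonoPerm Y]
  (hXnom : ∀ x : X, ∃ C : Finset ℚ, OLeastSupport C x)
  (hYnom : ∀ y : Y, ∃ C : Finset ℚ, OLeastSupport C y)
  (n : ℕ)

/-- The invariant data attached to an element of `X × Y`. -/
noncomputable def phi (z : X × Y) :
    Quotient (MulAction.orbitRel MonoPerm X) × Quotient (MulAction.orbitRel MonoPerm Y) ×
      Finset (Fin n) × Finset (Fin n) :=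
  (Quotient.mk _ z.1, Quotient.mk _ z.2,
   patt n (lsupp hXnom z.1 ∪ lsupp hYnom z.2) (lsupp hXnom z.1),
   patt n (lsupp hXnom z.1 ∪ lsupp hYnom z.2) (lsupp hYnom z.2))

lemma quot_smul {Z : Type*} [MulAction MonoPerm Z] (g : MonoPerm) (z : Z) :
    Quotient.mk (MulAction.orbitRel MonoPerm Z) (g • z) = Quotient.mk _ z :=
  Quotient.sound (MulAction.mem_orbit z g)

lemma phi_smul (g : MonoPerm) (z : X × Y) :
    phi hXnom hYnom n (g • z) = phi hXnom hYnom n z := by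
  have h1 : (g • z).1 = g • z.1 := rfl
  have h2 : (g • z).2 = g • z.2 := rfl
  have hU : lsupp hXnom (g • z).1 ∪ lsupp hYnom (g • z).2 =
      (lsupp hXnom z.1 ∪ lsupp hYnom z.2).image (g • ·) := by
    rw [h1, h2, lsupp_smul, lsupp_smul, Finset.image_union]
  unfold phi
  rw [hU, h1, h2, lsupp_smul, lsupp_smul, patt_smul, patt_smul, quot_smul, quot_smul]

/-- The set of orbits of dimension `n`. -/
def Sset : Set (Quotient (MulAction.orbitRel MonoPerm (X × Y))) :=
  {O | ∃ z : X × Y, Quotient.mk _ z = O ∧ ∃ C : Finset ℚ, OLeastSupport C z ∧ C.card = n}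

/-- The target data set. -/
def Tset : Set (Quotient (MulAction.orbitRel MonoPerm X) × Quotient (MulAction.orbitRel MonoPerm Y) ×
    Finset (Fin n) × Finset (Fin n)) :=
  {t | (∃ x : X, Quotient.mk _ x = t.1 ∧ ∃ C : Finset ℚ, OLeastSupport C x ∧ C.card = t.2.2.1.card) ∧
       (∃ y : Y, Quotient.mk _ y = t.2.1 ∧ ∃ D : Finset ℚ, OLeastSupport D y ∧ D.card = t.2.2.2.card) ∧
       t.2.2.1 ∪ t.2.2.2 = Finset.univ}

lemma phi_mem (w : X × Y) (C : Finset ℚ) (hC : OLeastSupport C w) (hcard : C.card = n) :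
    phi hXnom hYnom n w ∈ Tset n := by
  have hprod : OLeastSupport (lsupp hXnom w.1 ∪ lsupp hYnom w.2) w := by
    have := oleast_prod (lsupp_spec hXnom w.1) (lsupp_spec hYnom w.2)
    exact this
  have hS : (lsupp hXnom w.1 ∪ lsupp hYnom w.2).card = n := by
    rw [oleast_unique hprod hC, hcard]
  refine ⟨⟨w.1, rfl, lsupp hXnom w.1, lsupp_spec hXnom w.1, ?_⟩,
          ⟨w.2, rfl, lsupp hYnom w.2, lsupp_spec hYnom w.2, ?_⟩, ?_⟩
  · exact (patt_card hS Finset.subset_union_left).symm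
  · exact (patt_card hS Finset.subset_union_right).symm
  · exact patt_union_univ hS rfl

lemma exists_smul_out {Z : Type*} [MulAction MonoPerm Z] (z : Z) :
    ∃ g : MonoPerm, g • z = (Quotient.mk (MulAction.orbitRel MonoPerm Z) z).out := by
  have h := Quotient.mk_out (s := MulAction.orbitRel MonoPerm Z) z
  rw [MulAction.orbitRel_apply] at h
  obtain ⟨g, hg⟩ := h
  exact ⟨g, hg⟩

lemma phi_out (z : X × Y) :
    phi hXnom hYnom n (Quotient.mk (MulAction.orbitRel MonoPerm (X × Y)) z).out =
      phi hXnom hYnom n z := by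
  obtain ⟨g, hg⟩ := exists_smul_out z
  rw [← hg, phi_smul]

/-- Elements of orbits in `Sset` have a least support of size `n` (via their canonical one). -/
lemma out_dim {O : Quotient (MulAction.orbitRel MonoPerm (X × Y))} (hO : O ∈ Sset n) :
    (lsupp hXnom O.out.1 ∪ lsupp hYnom O.out.2).card = n := by
  obtain ⟨z, hz, C, hC, hcard⟩ := hO
  obtain ⟨g, hg⟩ := exists_smul_out z
  rw [hz] at hg
  have h1 : OLeastSupport (C.image (g • ·)) O.out := hg ▸ oleast_smul hC g
  have hprod : OLeastSupport (lsupp hXnom O.out.1 ∪ lsupp hYnom O.out.2) O.out :=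
    oleast_prod (lsupp_spec hXnom O.out.1) (lsupp_spec hYnom O.out.2)
  rw [oleast_unique hprod h1, card_image_smul, hcard]

/-- From equality of patterns and a perm matching the enumerations of the ambient sets,
images of the distinguished subsets match. -/
lemma image_of_patt_eq {S1 S2 C1 C2 : Finset ℚ} (h1 : S1.card = n) (h2 : S2.card = n)
    (hC1 : C1 ⊆ S1) (hC2 : C2 ⊆ S2) (π : MonoPerm)
    (hπ : ∀ k : Fin n, π • S1.orderEmbOfFin h1 k = S2.orderEmbOfFin h2 k)
    (hp : patt n S1 C1 = patt n S2 C2) : C1.image (π • ·) = C2 := by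
  have hsub : C1.image (π • ·) ⊆ C2 := by
    intro q hq
    obtain ⟨c, hc, rfl⟩ := Finset.mem_image.1 hq
    have : c ∈ Set.range (S1.orderEmbOfFin h1) := by
      rw [Finset.range_orderEmbOfFin]; exact hC1 hc
    obtain ⟨k, rfl⟩ := this
    have hk1 : k ∈ patt n S1 C1 := by
      rw [patt, dif_pos h1]
      exact Finset.mem_filter.2 ⟨Finset.mem_univ k, hc⟩
    rw [hp, patt, dif_pos h2] at hk1
    have := (Finset.mem_filter.1 hk1).2
    rwa [hπ k]
  have hcard : C2.card ≤ (C1.image (π • ·)).card := by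
    rw [Finset.card_image_of_injective _ (smul_injective π), ← patt_card h1 hC1, hp,
      patt_card h2 hC2]
  exact Finset.eq_of_subset_of_card_le hsub hcard

lemma image_smul_eq_of_emb {m : ℕ} {C C' : Finset ℚ} (h : C.card = m) (h' : C'.card = m)
    (π : MonoPerm) (hπ : ∀ k : Fin m, π • C.orderEmbOfFin h k = C'.orderEmbOfFin h' k) :
    C.image (π • ·) = C' := by
  apply Finset.eq_of_subset_of_card_le
  · intro q hq
    obtain ⟨c, hc, rfl⟩ := Finset.mem_image.1 hq
    have : c ∈ Set.range (C.orderEmbOfFin h) := by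
      rw [Finset.range_orderEmbOfFin]; exact hc
    obtain ⟨k, rfl⟩ := this
    rw [hπ k]
    exact Finset.orderEmbOfFin_mem C' h' k
  · rw [Finset.card_image_of_injective _ (smul_injective π), h, h']

lemma phi_injOn : Set.InjOn (fun O => phi hXnom hYnom n O.out) (Sset n) := by
  intro O1 hO1 O2 hO2 heq
  simp only [phi, Prod.mk.injEq] at heq
  obtain ⟨hq1, hq2, hpX, hpY⟩ := heq
  set w1 := O1.out with hw1
  set w2 := O2.out with hw2
  have hS1 : (lsupp hXnom w1.1 ∪ lsupp hYnom w1.2).card = n := out_dim hXnom hYnom n hO1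
  have hS2 : (lsupp hXnom w2.1 ∪ lsupp hYnom w2.2).card = n := out_dim hXnom hYnom n hO2
  obtain ⟨π, hπ⟩ := exists_monoPerm_map
    ((lsupp hXnom w1.1 ∪ lsupp hYnom w1.2).orderEmbOfFin hS1)
    ((lsupp hXnom w2.1 ∪ lsupp hYnom w2.2).orderEmbOfFin hS2)
    (Finset.orderEmbOfFin _ hS1).strictMono (Finset.orderEmbOfFin _ hS2).strictMono
  have hCX : (lsupp hXnom w1.1).image (π • ·) = lsupp hXnom w2.1 :=
    image_of_patt_eq n hS1 hS2 Finset.subset_union_left Finset.subset_union_left π hπ hpX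
  have hCY : (lsupp hYnom w1.2).image (π • ·) = lsupp hYnom w2.2 :=
    image_of_patt_eq n hS1 hS2 Finset.subset_union_right Finset.subset_union_right π hπ hpY
  -- π • w1.1 and w2.1 are in the same orbit with the same least support
  have hx : w2.1 = π • w1.1 := by
    have horb : Quotient.mk (MulAction.orbitRel MonoPerm X) (π • w1.1) = Quotient.mk _ w2.1 := by
      rw [quot_smul, hq1]
    obtain ⟨g, hg⟩ := Quotient.exact horb
    exact eq_of_smul_of_same_least g hg (lsupp_spec hXnom w2.1)
      (hCX ▸ oleast_smul (lsupp_spec hXnom w1.1) π)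
  have hy : w2.2 = π • w1.2 := by
    have horb : Quotient.mk (MulAction.orbitRel MonoPerm Y) (π • w1.2) = Quotient.mk _ w2.2 := by
      rw [quot_smul, hq2]
    obtain ⟨g, hg⟩ := Quotient.exact horb
    exact eq_of_smul_of_same_least g hg (lsupp_spec hYnom w2.2)
      (hCY ▸ oleast_smul (lsupp_spec hYnom w1.2) π)
  have hw : π • w1 = w2 := by
    have : π • w1 = (π • w1.1, π • w1.2) := rfl
    rw [this, ← hx, ← hy]
  calc O1 = Quotient.mk _ w1 := (Quotient.out_eq O1).symm
  _ = Quotient.mk _ (π • w1) := (quot_smul π w1).symm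
  _ = Quotient.mk _ w2 := by rw [hw]
  _ = O2 := Quotient.out_eq O2

/-- The canonical copy of `Fin n` inside ℚ. -/
lemma cast_strictMono : StrictMono (fun k : Fin n => ((k : ℕ) : ℚ)) :=
  fun a b hab => Nat.cast_lt.mpr hab

lemma card_image_cast (A : Finset (Fin n)) :
    (A.image (fun k : Fin n => ((k : ℕ) : ℚ))).card = A.card :=
  Finset.card_image_of_injective _ (cast_strictMono n).injective

lemma phi_surjOn : (Tset n : Set _) ⊆ (fun O => phi hXnom hYnom n O.out) '' (Sset n) := by
  rintro ⟨q1, q2, A, B⟩ ⟨⟨x, hx, C, hC, hCcard⟩, ⟨y, hy, D, hD, hDcard⟩, hAB⟩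
  simp only at hCcard hDcard hAB
  set cst : Fin n → ℚ := fun k => ((k : ℕ) : ℚ) with hcst
  -- target rational sets
  have hC'card : (A.image cst).card = C.card := by rw [card_image_cast, hCcard]
  have hD'card : (B.image cst).card = D.card := by rw [card_image_cast, hDcard]
  obtain ⟨π, hπ⟩ := exists_monoPerm_map (C.orderEmbOfFin rfl) ((A.image cst).orderEmbOfFin hC'card)
    (C.orderEmbOfFin rfl).strictMono ((A.image cst).orderEmbOfFin hC'card).strictMono
  obtain ⟨σ, hσ⟩ := exists_monoPerm_map (D.orderEmbOfFin rfl) ((B.image cst).orderEmbOfFin hD'card)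
    (D.orderEmbOfFin rfl).strictMono ((B.image cst).orderEmbOfFin hD'card).strictMono
  have hCim : C.image (π • ·) = A.image cst := image_smul_eq_of_emb rfl hC'card π hπ
  have hDim : D.image (σ • ·) = B.image cst := image_smul_eq_of_emb rfl hD'card σ hσ
  set z : X × Y := (π • x, σ • y) with hz
  have hlx : OLeastSupport (A.image cst) (π • x) := hCim ▸ oleast_smul hC π
  have hly : OLeastSupport (B.image cst) (σ • y) := hDim ▸ oleast_smul hD σ
  have hzleast : OLeastSupport (A.image cst ∪ B.image cst) z := oleast_prod hlx hly
  have hUim : A.image cst ∪ B.image cst = Finset.univ.image cst := by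
    rw [← Finset.image_union, hAB]
  have hScard : (A.image cst ∪ B.image cst).card = n := by
    rw [hUim, Finset.card_image_of_injective _ (cast_strictMono n).injective, Finset.card_univ,
      Fintype.card_fin]
  refine ⟨Quotient.mk _ z, ⟨z, rfl, A.image cst ∪ B.image cst, hzleast, hScard⟩, ?_⟩
  show phi hXnom hYnom n (Quotient.mk (MulAction.orbitRel MonoPerm (X × Y)) z).out = _
  rw [phi_out]
  -- compute phi z
  have hz1 : lsupp hXnom z.1 = A.image cst := lsupp_eq hXnom hlx
  have hz2 : lsupp hYnom z.2 = B.image cst := lsupp_eq hYnom hly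
  have hemb : ∀ k : Fin n, (A.image cst ∪ B.image cst).orderEmbOfFin hScard k = cst k := by
    have hmem : ∀ k : Fin n, cst k ∈ A.image cst ∪ B.image cst := by
      intro k
      have : k ∈ A ∪ B := by rw [hAB]; exact Finset.mem_univ k
      rcases Finset.mem_union.1 this with h | h
      · exact Finset.mem_union_left _ (Finset.mem_image_of_mem _ h)
      · exact Finset.mem_union_right _ (Finset.mem_image_of_mem _ h)
    have := Finset.orderEmbOfFin_unique hScard hmem (cast_strictMono n)
    exact fun k => (congrFun this k).symm
  have hpattA : patt n (A.image cst ∪ B.image cst) (A.image cst) = A := by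
    rw [patt, dif_pos hScard]
    ext k
    simp only [Finset.mem_filter, Finset.mem_univ, true_and, hemb k]
    constructor
    · intro hk
      obtain ⟨a, ha, hae⟩ := Finset.mem_image.1 hk
      rwa [← (cast_strictMono n).injective hae]
    · exact fun hk => Finset.mem_image_of_mem _ hk
  have hpattB : patt n (A.image cst ∪ B.image cst) (B.image cst) = B := by
    rw [patt, dif_pos hScard]
    ext k
    simp only [Finset.mem_filter, Finset.mem_univ, true_and, hemb k]
    constructor
    · intro hk
      obtain ⟨a, ha, hae⟩ := Finset.mem_image.1 hk
      rwa [← (cast_strictMono n).injective hae]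
    · exact fun hk => Finset.mem_image_of_mem _ hk
  show phi hXnom hYnom n z = (q1, q2, A, B)
  have hq1 : Quotient.mk (MulAction.orbitRel MonoPerm X) z.1 = q1 := by
    show Quotient.mk _ (π • x) = q1
    rw [quot_smul, hx]
  have hq2 : Quotient.mk (MulAction.orbitRel MonoPerm Y) z.2 = q2 := by
    show Quotient.mk _ (σ • y) = q2
    rw [quot_smul, hy]
  rw [phi, hz1, hz2, hpattA, hpattB, hq1, hq2]

end main
end MP

namespace MP2
open Finset

/-- Number of pairs of subsets of `Fin n` with given sizes covering everything. -/
lemma countPairs (n i j : ℕ) (hi : i ≤ n) (hj : j ≤ n) :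
    ((univ : Finset (Finset (Fin n) × Finset (Fin n))).filter
      (fun p => (p.1.card, p.2.card) = (i, j) ∧ p.1 ∪ p.2 = univ)).card =
    if n ≤ i + j then n.choose j * j.choose (n - i) else 0 := by
  classical
  split_ifs with hn
  · have hbij := Finset.card_nbij'
      (s := (univ : Finset (Finset (Fin n) × Finset (Fin n))).filter
        (fun p => (p.1.card, p.2.card) = (i, j) ∧ p.1 ∪ p.2 = univ))
      (t := (univ.powersetCard j).sigma (fun B => B.powersetCard (i + j - n)))
      (i := fun p => ⟨p.2, p.1 ∩ p.2⟩)
      (j := fun q => (q.1ᶜ ∪ q.2, q.1))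
      ?_ ?_ ?_ ?_
    · rw [hbij]
      rw [Finset.card_sigma]
      have hcongr : ∀ B ∈ (univ : Finset (Fin n)).powersetCard j,
          (B.powersetCard (i + j - n)).card = j.choose (n - i) := by
        intro B hB
        have hBcard : B.card = j := (Finset.mem_powersetCard.1 hB).2
        rw [Finset.card_powersetCard, hBcard]
        have h1 : i + j - n ≤ j := by omega
        rw [← Nat.choose_symm h1]
        congr 1
        omega
      calc ∑ B ∈ (univ : Finset (Fin n)).powersetCard j,
            (B.powersetCard (i + j - n)).card
          = ∑ _B ∈ (univ : Finset (Fin n)).powersetCard j, j.choose (n - i) :=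
            Finset.sum_congr rfl hcongr
        _ = n.choose j * j.choose (n - i) := by
            rw [Finset.sum_const, Finset.card_powersetCard, Finset.card_univ,
              Fintype.card_fin, smul_eq_mul]
    · -- maps into t
      rintro ⟨A, B⟩ hp
      obtain ⟨hcards, hun⟩ := (Finset.mem_filter.1 hp).2
      simp only [Prod.mk.injEq] at hcards
      obtain ⟨hA, hB⟩ := hcards
      refine Finset.mem_sigma.2 ⟨Finset.mem_powersetCard.2 ⟨Finset.subset_univ _, hB⟩,
        Finset.mem_powersetCard.2 ⟨Finset.inter_subset_right, ?_⟩⟩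
      show (A ∩ B).card = i + j - n
      have := Finset.card_inter_add_card_union A B
      rw [hA, hB, hun, Finset.card_univ, Fintype.card_fin] at this
      omega
    · -- inverse maps into s
      rintro ⟨B, E⟩ hq
      obtain ⟨hB, hE⟩ := Finset.mem_sigma.1 hq
      have hBcard : B.card = j := (Finset.mem_powersetCard.1 hB).2
      have hEsub : E ⊆ B := (Finset.mem_powersetCard.1 hE).1
      have hEcard : E.card = i + j - n := (Finset.mem_powersetCard.1 hE).2
      refine Finset.mem_filter.2 ⟨Finset.mem_univ _, ?_, ?_⟩
      · have hdisj : Disjoint Bᶜ E := by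
          rw [Finset.disjoint_left]
          intro a ha ha2
          exact (Finset.mem_compl.1 ha) (hEsub ha2)
        have hcu : (Bᶜ ∪ E).card = Bᶜ.card + E.card := Finset.card_union_of_disjoint hdisj
        simp only [Prod.mk.injEq]
        refine ⟨?_, hBcard⟩
        rw [hcu, Finset.card_compl, Fintype.card_fin, hBcard, hEcard]
        omega
      · show Bᶜ ∪ E ∪ B = univ
        rw [Finset.union_right_comm]
        have hbb : Bᶜ ∪ B = univ := by
          ext a
          simp only [Finset.mem_union, Finset.mem_compl, Finset.mem_univ, iff_true]
          tauto
        rw [hbb]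
        ext a
        simp
    · -- left inverse
      rintro ⟨A, B⟩ hp
      have hun : A ∪ B = univ := (Finset.mem_filter.1 hp).2.2
      have hsub : Bᶜ ⊆ A := by
        intro a ha
        have : a ∈ A ∪ B := hun ▸ Finset.mem_univ a
        rcases Finset.mem_union.1 this with h | h
        · exact h
        · exact absurd h (Finset.mem_compl.1 ha)
      show (Bᶜ ∪ A ∩ B, B) = (A, B)
      have h1 : Bᶜ ∪ A ∩ B = A := by
        ext a
        simp only [Finset.mem_union, Finset.mem_compl, Finset.mem_inter]
        constructor
        · rintro (h | ⟨h, -⟩)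
          · exact hsub (Finset.mem_compl.2 h)
          · exact h
        · intro h
          by_cases hb : a ∈ B
          · exact Or.inr ⟨h, hb⟩
          · exact Or.inl hb
      rw [h1]
    · -- right inverse
      rintro ⟨B, E⟩ hq
      obtain ⟨hB, hE⟩ := Finset.mem_sigma.1 hq
      have hEsub : E ⊆ B := (Finset.mem_powersetCard.1 hE).1
      show (⟨B, (Bᶜ ∪ E) ∩ B⟩ : Σ _ : Finset (Fin n), Finset (Fin n)) = ⟨B, E⟩
      have h1 : (Bᶜ ∪ E) ∩ B = E := by
        ext a
        simp only [Finset.mem_inter, Finset.mem_union, Finset.mem_compl]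
        constructor
        · rintro ⟨h1 | h1, h2⟩
          · exact absurd h2 h1
          · exact h1
        · intro h
          exact ⟨Or.inr h, hEsub h⟩
      rw [h1]
  · rw [Finset.card_eq_zero, Finset.filter_eq_empty_iff]
    rintro ⟨A, B⟩ -
    rintro ⟨hcards, hun⟩
    simp only [Prod.mk.injEq] at hcards
    have := Finset.card_union_le A B
    rw [hun, Finset.card_univ, Fintype.card_fin, hcards.1, hcards.2] at this
    omega

end MP2

namespace MP2
open Finset

lemma ncard_filter {γ : Type*} [Fintype γ] (p : γ → Prop) [DecidablePred p] :
    Set.ncard {x | p x} = (univ.filter p).card := by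
  have h : {x | p x} = ((univ.filter p : Finset γ) : Set γ) := by
    ext x; simp
  rw [h, Set.ncard_coe_finset]

lemma count_T {α β : Type*} [Finite α] [Finite β] (pX : α → ℕ → Prop) (pY : β → ℕ → Prop)
    (n : ℕ) (f g : ℕ → ℕ)
    (hf : ∀ i, f i = Set.ncard {a : α | pX a i})
    (hg : ∀ j, g j = Set.ncard {b : β | pY b j}) :
    Set.ncard {t : α × β × Finset (Fin n) × Finset (Fin n) |
        pX t.1 t.2.2.1.card ∧ pY t.2.1 t.2.2.2.card ∧ t.2.2.1 ∪ t.2.2.2 = Finset.univ} =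
    ∑ i ∈ Finset.range (n+1), ∑ j ∈ Finset.range (n+1),
      if n ≤ i + j then f i * g j * n.choose j * j.choose (n - i) else 0 := by
  classical
  letI := Fintype.ofFinite α
  letI := Fintype.ofFinite β
  set TF : Finset (α × β × Finset (Fin n) × Finset (Fin n)) :=
    univ.filter (fun t => pX t.1 t.2.2.1.card ∧ pY t.2.1 t.2.2.2.card ∧
      t.2.2.1 ∪ t.2.2.2 = Finset.univ) with hTF
  have step0 : Set.ncard {t : α × β × Finset (Fin n) × Finset (Fin n) |
      pX t.1 t.2.2.1.card ∧ pY t.2.1 t.2.2.2.card ∧ t.2.2.1 ∪ t.2.2.2 = Finset.univ} =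
      TF.card := ncard_filter _
  rw [step0]
  have step1 : TF.card = ∑ p ∈ (univ : Finset (Finset (Fin n) × Finset (Fin n))),
      (TF.filter (fun t => t.2.2 = p)).card :=
    Finset.card_eq_sum_card_fiberwise (fun t _ => mem_univ _)
  rw [step1]
  have step2 : ∀ p : Finset (Fin n) × Finset (Fin n),
      (TF.filter (fun t => t.2.2 = p)).card =
      if p.1 ∪ p.2 = univ then f p.1.card * g p.2.card else 0 := by
    intro p
    split_ifs with hun
    · have hbij := Finset.card_nbij'
        (s := TF.filter (fun t => t.2.2 = p))
        (t := (univ.filter (fun a : α => pX a p.1.card)) ×ˢ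
              (univ.filter (fun b : β => pY b p.2.card)))
        (i := fun t => (t.1, t.2.1))
        (j := fun o => (o.1, o.2, p))
        ?_ ?_ ?_ ?_
      · rw [hbij, Finset.card_product, hf, hg, ncard_filter, ncard_filter]
      · rintro ⟨a, b, q⟩ ht
        obtain ⟨hmem, hq⟩ := Finset.mem_filter.1 ht
        obtain ⟨h1, h2, h3⟩ := Finset.mem_filter.1 hmem |>.2
        simp only at hq
        subst hq
        exact Finset.mem_product.2 ⟨Finset.mem_filter.2 ⟨mem_univ _, h1⟩,
          Finset.mem_filter.2 ⟨mem_univ _, h2⟩⟩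
      · rintro ⟨a, b⟩ ho
        obtain ⟨ha, hb⟩ := Finset.mem_product.1 ho
        refine Finset.mem_filter.2 ⟨Finset.mem_filter.2 ⟨mem_univ _,
          (Finset.mem_filter.1 ha).2, (Finset.mem_filter.1 hb).2, hun⟩, rfl⟩
      · rintro ⟨a, b, q⟩ ht
        have hq : q = p := (Finset.mem_filter.1 ht).2
        subst hq
        rfl
      · rintro ⟨a, b⟩ _
        rfl
    · rw [Finset.card_eq_zero, Finset.filter_eq_empty_iff]
      rintro t ht hq
      obtain ⟨-, -, h3⟩ := (Finset.mem_filter.1 ht).2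
      rw [hq] at h3
      exact hun h3
  rw [Finset.sum_congr rfl (fun p _ => step2 p)]
  -- regroup by cardinalities
  have step3 := Finset.sum_fiberwise_of_maps_to
    (s := (univ : Finset (Finset (Fin n) × Finset (Fin n))))
    (t := Finset.range (n+1) ×ˢ Finset.range (n+1))
    (g := fun p => (p.1.card, p.2.card))
    (f := fun p => if p.1 ∪ p.2 = univ then f p.1.card * g p.2.card else 0)
    (by
      intro p _
      refine Finset.mem_product.2 ⟨Finset.mem_range.2 ?_, Finset.mem_range.2 ?_⟩
      · exact Nat.lt_succ_of_le (by simpa using Finset.card_le_univ p.1)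
      · exact Nat.lt_succ_of_le (by simpa using Finset.card_le_univ p.2))
  rw [← step3, Finset.sum_product]
  refine Finset.sum_congr rfl (fun i hi => Finset.sum_congr rfl (fun j hj => ?_))
  have hi' : i ≤ n := Nat.lt_succ_iff.1 (Finset.mem_range.1 hi)
  have hj' : j ≤ n := Nat.lt_succ_iff.1 (Finset.mem_range.1 hj)
  have hinner : ∀ p ∈ (univ : Finset (Finset (Fin n) × Finset (Fin n))).filter
      (fun p => (p.1.card, p.2.card) = (i, j)),
      (if p.1 ∪ p.2 = univ then f p.1.card * g p.2.card else 0) =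
      (if p.1 ∪ p.2 = univ then f i * g j else 0) := by
    intro p hp
    have hc := (Finset.mem_filter.1 hp).2
    simp only [Prod.mk.injEq] at hc
    rw [hc.1, hc.2]
  rw [Finset.sum_congr rfl hinner, ← Finset.sum_filter, Finset.sum_const, smul_eq_mul,
    Finset.filter_filter]
  have := countPairs n i j hi' hj'
  have hpred : ((univ : Finset (Finset (Fin n) × Finset (Fin n))).filter
      (fun p => (p.1.card, p.2.card) = (i, j) ∧ p.1 ∪ p.2 = univ)).card * (f i * g j) =
      (if n ≤ i + j then n.choose j * j.choose (n - i) else 0) * (f i * g j) := by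
    rw [this]
  rw [hpred]
  split_ifs with hn
  · ring
  · ring

end MP2

/-- Orbit counting for products: if the orbit-finite nominal sets `X` and `Y`
are represented by the multiplicity functions `f` and `g`, then the number of
orbits of `X × Y` of dimension `n` is
`∑_{i,j ≤ n, i+j ≥ n} f i * g j * C(n,j) * C(j, n-i)`. -/
theorem stmt_13 {X Y : Type*} [MulAction MonoPerm X] [MulAction MonoPerm Y]
    (hXnom : ∀ x : X, ∃ C : Finset ℚ, OLeastSupport C x)
    (hYnom : ∀ y : Y, ∃ C : Finset ℚ, OLeastSupport C y)
    (hXfin : Finite (Quotient (MulAction.orbitRel MonoPerm X)))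
    (hYfin : Finite (Quotient (MulAction.orbitRel MonoPerm Y)))
    (f g : ℕ → ℕ)
    (hf : ∀ n, f n = orbitCountDim X n)
    (hg : ∀ n, g n = orbitCountDim Y n)
    (n : ℕ) :
    orbitCountDim (X × Y) n =
      ∑ i ∈ Finset.range (n + 1), ∑ j ∈ Finset.range (n + 1),
        if n ≤ i + j then f i * g j * n.choose j * j.choose (n - i) else 0 := by
  classical
  have h0 : orbitCountDim (X × Y) n = (MP.Sset (X := X) (Y := Y) n).ncard := rfl
  have hmaps : Set.MapsTo (fun O => MP.phi hXnom hYnom n O.out) (MP.Sset n) (MP.Tset n) := by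
    intro O hO
    exact MP.phi_mem hXnom hYnom n O.out _
      (MP.oleast_prod (MP.lsupp_spec hXnom O.out.1) (MP.lsupp_spec hYnom O.out.2))
      (MP.out_dim hXnom hYnom n hO)
  have hinj := MP.phi_injOn hXnom hYnom n
  have hsurj := MP.phi_surjOn hXnom hYnom n
  have himg : (fun O => MP.phi hXnom hYnom n O.out) '' (MP.Sset n) = MP.Tset n :=
    Set.Subset.antisymm (Set.image_subset_iff.2 hmaps) hsurj
  have h1 : (MP.Sset (X := X) (Y := Y) n).ncard = (MP.Tset (X := X) (Y := Y) n).ncard := by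
    rw [← himg, Set.ncard_image_of_injOn hinj]
  have h2 := MP2.count_T
    (α := Quotient (MulAction.orbitRel MonoPerm X))
    (β := Quotient (MulAction.orbitRel MonoPerm Y))
    (pX := fun O i => ∃ x : X, Quotient.mk _ x = O ∧ ∃ C : Finset ℚ, OLeastSupport C x ∧ C.card = i)
    (pY := fun O j => ∃ y : Y, Quotient.mk _ y = O ∧ ∃ D : Finset ℚ, OLeastSupport D y ∧ D.card = j)
    n f g (fun i => hf i) (fun j => hg j)
  rw [h0, h1]
  exact h2
end
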